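/- Let Ω ⊂ ℍₛⁿ be a weakly axially symmetric slice-domain with Ω ∩ ℝⁿ ≠ ∅ (weakly axially symmetric: for every q = x + yI ∈ Ω with x, y ∈ ℝⁿ, I ∈ 𝕊, also x − yI ∈ Ω). Then Ω is self-stem-preserving. -/

import Mathlib

noncomputable section
open Quaternion Matrix

abbrev Hq := Quaternion ℝ

/-- The set of quaternionic imaginary units. -/
def Sph : Set Hq := {I | I ^ 2 = -1}

/-- `Ψ_i^I` applied to a single complex number: `x + y i ↦ x + y I`. -/
def psi (I : Hq) (z : ℂ) : Hq := (z.re : Hq) + z.im • I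

/-- `Ψ_i^I : ℂⁿ → ℂ_Iⁿ`, componentwise. -/
def liftMap {n : ℕ} (I : Hq) (z : Fin n → ℂ) : Fin n → Hq := fun k => psi I (z k)

/-- The weakly slice cone `Hqₛⁿ = ⋃_{I∈𝕊} ℂ_Iⁿ`. -/
def HSn (n : ℕ) : Set (Fin n → Hq) := {q | ∃ I ∈ Sph, ∃ z : Fin n → ℂ, q = liftMap I z}

/-- A point of `ℂⁿ` is real. -/
def isRealPt {n : ℕ} (z : Fin n → ℂ) : Prop := ∀ k, (z k).im = 0

/-- A point of `Hqⁿ` is real. -/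
def isRealH {n : ℕ} (q : Fin n → Hq) : Prop := ∀ k, q k = ((q k).re : Hq)

/-- The lifted path `γ^I = Ψ_i^I ∘ γ`. -/
def liftP {n : ℕ} (γ : C(unitInterval, Fin n → ℂ)) (I : Hq) (t : unitInterval) : Fin n → Hq :=
  liftMap I (γ t)

/-- `𝕊(Ω, γ) = {I ∈ 𝕊 : γ^I ⊂ Ω}`. -/
def SUnits {n : ℕ} (Ω : Set (Fin n → Hq)) (γ : C(unitInterval, Fin n → ℂ)) : Set Hq :=
  {I | I ∈ Sph ∧ ∀ t, liftP γ I t ∈ Ω}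

/-- `𝒫(ℂⁿ, Ω)`: continuous paths starting in `ℝⁿ` with some lift inside `Ω`. -/
def PathsTo {n : ℕ} (Ω : Set (Fin n → Hq)) : Set C(unitInterval, Fin n → ℂ) :=
  {γ | isRealPt (γ 0) ∧ ∃ I, I ∈ SUnits Ω γ}

/-- `F` is a path-slice stem function of `f` on `Ω`:
`f(γ^I(1)) = (1, I)·F(γ)`. -/
def IsStem {n : ℕ} (Ω : Set (Fin n → Hq)) (f : (Fin n → Hq) → Hq)
    (F : C(unitInterval, Fin n → ℂ) → Fin 2 → Hq) : Prop :=
  ∀ γ ∈ PathsTo Ω, ∀ I ∈ SUnits Ω γ, f (liftP γ I 1) = F γ 0 + I * F γ 1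

/-- `f` is path-slice on `Ω`. -/
def IsPathSlice {n : ℕ} (Ω : Set (Fin n → Hq)) (f : (Fin n → Hq) → Hq) : Prop :=
  ∃ F, IsStem Ω f F

/-- `Ω` is real-path-connected. -/
def RealPathConnected {n : ℕ} (Ω : Set (Fin n → Hq)) : Prop :=
  ∀ q ∈ Ω, ∃ γ ∈ PathsTo Ω, ∃ I ∈ SUnits Ω γ, liftP γ I 1 = q

/-- `Ω₂` is `Ω₁`-stem-preserving: (i) every path of `𝒫(ℂⁿ,Ω₁)` has at least two
units in `𝕊(Ω₂,γ)`; (ii) two paths with the same endpoint share `≠ 1` units. -/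
def StemPreserving {n : ℕ} (Ω₁ Ω₂ : Set (Fin n → Hq)) : Prop :=
  (∀ γ ∈ PathsTo Ω₁, ∃ I ∈ SUnits Ω₂ γ, ∃ J ∈ SUnits Ω₂ γ, I ≠ J) ∧
  (∀ α ∈ PathsTo Ω₁, ∀ β ∈ PathsTo Ω₁, α 1 = β 1 →
    ∀ I ∈ SUnits Ω₂ α ∩ SUnits Ω₂ β, ∃ J ∈ SUnits Ω₂ α ∩ SUnits Ω₂ β, J ≠ I)

/-- The formula `((1,I),(1,J))⁻¹ (f(γ^I(1)), f(γ^J(1)))ᵀ`. -/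
def stemFormula {n : ℕ} (f : (Fin n → Hq) → Hq) (γ : C(unitInterval, Fin n → ℂ)) (I J : Hq) :
    Fin 2 → Hq :=
  ((I - J)⁻¹ • !![I, -J; (1 : Hq), -1]).mulVec ![f (liftP γ I 1), f (liftP γ J 1)]

/-- The sub-stem function `F_{Ω₁}^f` (depends only on `Ω₂` and `f`). -/
noncomputable def subStem {n : ℕ} (Ω₂ : Set (Fin n → Hq)) (f : (Fin n → Hq) → Hq)
    (γ : C(unitInterval, Fin n → ℂ)) : Fin 2 → Hq := by
  classical
  exact if h : ∃ p : Hq × Hq, p.1 ∈ SUnits Ω₂ γ ∧ p.2 ∈ SUnits Ω₂ γ ∧ p.1 ≠ p.2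
    then stemFormula f γ h.choose.1 h.choose.2
    else 0

/-- Normalized imaginary part of a quaternion. -/
def imUnit (a : Hq) : Hq := (‖a - (a.re : Hq)‖)⁻¹ • (a - (a.re : Hq))

/-- The map `𝔍 : Hqₛⁿ → 𝕊 ∪ {0}`. -/
noncomputable def Jmap {n : ℕ} (q : Fin n → Hq) : Hq := by
  classical
  exact if h : ∃ k : Fin n, q k ≠ ((q k).re : Hq) then
    imUnit (q ((Finset.univ.filter fun k => q k ≠ ((q k).re : Hq)).min'
      ⟨h.choose, Finset.mem_filter.2 ⟨Finset.mem_univ _, h.choose_spec⟩⟩))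
  else 0

/-- Componentwise complex conjugate of a path. -/
def conjPath {n : ℕ} (γ : C(unitInterval, Fin n → ℂ)) : C(unitInterval, Fin n → ℂ) :=
  ⟨fun t k => star (γ t k),
    continuous_pi fun k => continuous_star.comp ((continuous_apply k).comp γ.continuous)⟩

/-- The point-form sub-stem function `ℱ_{Ω₁}^f : Ω₁ → Hq^{2×1}`. -/
noncomputable def pointStem {n : ℕ} (Ω₁ Ω₂ : Set (Fin n → Hq)) (f : (Fin n → Hq) → Hq)
    (q : Fin n → Hq) : Fin 2 → Hq := by
  classical
  exact if isRealH q then ![f q, 0]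
    else if h : ∃ γ, γ ∈ PathsTo Ω₁ ∧ (∀ t, liftP γ (Jmap q) t ∈ Ω₁) ∧ liftP γ (Jmap q) 1 = q
    then subStem Ω₂ f h.choose
    else 0

/-- The `*`-product of functions: `(f*g)(q) = (f(q), 𝔍(q)f(q)) · ℱ_{Ω₁}^g(q)`. -/
noncomputable def starProd {n : ℕ} (Ω₁ Ω₂ : Set (Fin n → Hq)) (f g : (Fin n → Hq) → Hq)
    (q : Fin n → Hq) : Hq :=
  f q * pointStem Ω₁ Ω₂ g q 0 + (Jmap q * f q) * pointStem Ω₁ Ω₂ g q 1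

/-- The `*`-product on `Hq^{2×1}` coming from `Hq ⊗_ℝ ℂ`. -/
def vstar (p q : Fin 2 → Hq) : Fin 2 → Hq :=
  ![p 0 * q 0 - p 1 * q 1, p 1 * q 0 + p 0 * q 1]

/-- `Ω` is slice-open: a subset of `Hqₛⁿ` all of whose slices are open. -/
def SliceOpen {n : ℕ} (Ω : Set (Fin n → Hq)) : Prop :=
  Ω ⊆ HSn n ∧ ∀ I ∈ Sph, IsOpen {z : Fin n → ℂ | liftMap I z ∈ Ω}

/-- `Ω` is slice-connected. -/
def SliceConnected {n : ℕ} (Ω : Set (Fin n → Hq)) : Prop :=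
  ∀ U V : Set (Fin n → Hq), SliceOpen U → SliceOpen V → Ω ⊆ U ∪ V →
    (Ω ∩ U).Nonempty → (Ω ∩ V).Nonempty → (Ω ∩ U ∩ V).Nonempty

/-- `Ω` is a slice-domain. -/
def SliceDomain {n : ℕ} (Ω : Set (Fin n → Hq)) : Prop :=
  SliceOpen Ω ∧ SliceConnected Ω

/-- `Ω` is self-stem-preserving. -/
def SelfStemPreserving {n : ℕ} (Ω : Set (Fin n → Hq)) : Prop :=
  RealPathConnected Ω ∧ StemPreserving Ω Ω

/-- `Ω` is open in the Euclidean subspace topology of `Hqₛⁿ`. -/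
def EuclideanOpenIn {n : ℕ} (Ω : Set (Fin n → Hq)) : Prop :=
  ∃ U : Set (Fin n → Hq), IsOpen U ∧ Ω = U ∩ HSn n

/-- `Ω` is weakly axially symmetric. -/
def WeaklyAxiallySymmetric {n : ℕ} (Ω : Set (Fin n → Hq)) : Prop :=
  ∀ (x y : Fin n → ℝ) (I : Hq), I ∈ Sph →
    (fun k => (x k : Hq) + y k • I) ∈ Ω → (fun k => (x k : Hq) - y k • I) ∈ Ω
/-! ### Auxiliary lemmas -/

lemma sph_mul_self {I : Hq} (hI : I ∈ Sph) : I * I = -1 := by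
  have := hI; rw [Sph, Set.mem_setOf_eq, sq] at this; exact this

lemma sph_re {I : Hq} (hI : I ∈ Sph) : I.re = 0 := by
  have h := sph_mul_self hI
  have hre : I.re * I.re - I.imI * I.imI - I.imJ * I.imJ - I.imK * I.imK = -1 := by
    simpa [Quaternion.re_mul] using congrArg QuaternionAlgebra.re h
  have hi : I.re * I.imI + I.imI * I.re + I.imJ * I.imK - I.imK * I.imJ = 0 := by
    simpa [Quaternion.imI_mul] using congrArg QuaternionAlgebra.imI h
  have hj : I.re * I.imJ - I.imI * I.imK + I.imJ * I.re + I.imK * I.imI = 0 := by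
    simpa [Quaternion.imJ_mul] using congrArg QuaternionAlgebra.imJ h
  have hk : I.re * I.imK + I.imI * I.imJ - I.imJ * I.imI + I.imK * I.re = 0 := by
    simpa [Quaternion.imK_mul] using congrArg QuaternionAlgebra.imK h
  by_contra hre0
  have e1 : I.re * I.imI = 0 := by linear_combination hi / 2
  have e2 : I.re * I.imJ = 0 := by linear_combination hj / 2
  have e3 : I.re * I.imK = 0 := by linear_combination hk / 2
  have h1 : I.imI = 0 := (mul_eq_zero.mp e1).resolve_left hre0
  have h2 : I.imJ = 0 := (mul_eq_zero.mp e2).resolve_left hre0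
  have h3 : I.imK = 0 := (mul_eq_zero.mp e3).resolve_left hre0
  nlinarith [hre, h1, h2, h3, mul_self_nonneg I.re]

lemma sph_ne_zero {I : Hq} (hI : I ∈ Sph) : I ≠ 0 := by
  intro h; rw [h] at hI
  have := sph_mul_self hI
  norm_num at this

lemma neg_mem_sph {I : Hq} (hI : I ∈ Sph) : -I ∈ Sph := by
  simpa [Sph, Set.mem_setOf_eq, neg_sq] using hI

lemma sph_ne_neg {I : Hq} (hI : I ∈ Sph) : I ≠ -I := by
  intro h
  apply sph_ne_zero hI
  have h2 : I + I = 0 := by nth_rewrite 2 [h]; simp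
  have h3 : (2 : ℝ) • I = 0 := by rw [two_smul]; exact h2
  rcases smul_eq_zero.mp h3 with h' | h'
  · norm_num at h'
  · exact h'

lemma psi_re {I : Hq} (hI : I ∈ Sph) (z : ℂ) : (psi I z).re = z.re := by
  simp [psi, Quaternion.re_smul, sph_re hI]

lemma smul_sph_inj {I : Hq} (hI : I ∈ Sph) {a b : ℝ} (h : a • I = b • I) : a = b := by
  have h0 : (a - b) • I = 0 := by rw [sub_smul, h, sub_self]
  rcases smul_eq_zero.mp h0 with h' | h'
  · exact sub_eq_zero.mp h'
  · exact absurd h' (sph_ne_zero hI)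

lemma smul_sph_cross {I K : Hq} (hI : I ∈ Sph) (hK : K ∈ Sph) {a b : ℝ} (ha : a ≠ 0)
    (h : a • I = b • K) : (I = K ∧ a = b) ∨ (I = -K ∧ a = -b) := by
  set c := a⁻¹ * b with hc
  have hIc : I = c • K := by
    have : a⁻¹ • (a • I) = a⁻¹ • (b • K) := by rw [h]
    rwa [smul_smul, smul_smul, inv_mul_cancel₀ ha, one_smul] at this
  have hsq : (c * c) • (K * K) = (-1 : Hq) := by
    rw [← smul_mul_smul_comm, ← hIc, sph_mul_self hI]
  rw [sph_mul_self hK] at hsq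
  have hre : c * c = 1 := by
    have := congrArg QuaternionAlgebra.re hsq
    simp [Quaternion.re_smul] at this
    linarith
  rcases mul_self_eq_one_iff.mp hre with h1 | h1
  · left
    have hIK : I = K := by rw [hIc, h1, one_smul]
    refine ⟨hIK, smul_sph_inj hI ?_⟩
    rw [h, hIK]
  · right
    have hIK : I = -K := by rw [hIc, h1]; simp
    refine ⟨hIK, ?_⟩
    have : a • I = (-b) • I := by rw [h, hIK]; simp
    exact smul_sph_inj hI this

lemma psi_conj (I : Hq) (z : ℂ) : psi (-I) (star z) = psi I z := by
  simp [psi, Complex.star_def, smul_neg]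

lemma liftMap_conj {n : ℕ} (I : Hq) (z : Fin n → ℂ) :
    liftMap (-I) (fun k => star (z k)) = liftMap I z := by
  funext k; exact psi_conj I (z k)

lemma liftP_conjPath {n : ℕ} (γ : C(unitInterval, Fin n → ℂ)) (I : Hq) (t : unitInterval) :
    liftP (conjPath γ) (-I) t = liftP γ I t := by
  funext k
  show psi (-I) (star (γ t k)) = psi I (γ t k)
  exact psi_conj I (γ t k)

lemma psi_eq_real {I : Hq} (hI : I ∈ Sph) {z : ℂ} {r : ℝ} (h : psi I z = (r : Hq)) :
    z.im = 0 ∧ z.re = r := by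
  have hre : z.re = r := by
    have := congrArg QuaternionAlgebra.re h
    rwa [psi_re hI] at this
  have h0 : z.im • I = 0 := by
    have h' : (z.re : Hq) + z.im • I = (z.re : Hq) + 0 := by
      rw [add_zero]; show psi I z = _; rw [h, hre]
    exact add_left_cancel h'
  constructor
  · rcases smul_eq_zero.mp h0 with h' | h'
    · exact h'
    · exact absurd h' (sph_ne_zero hI)
  · exact hre

/-- Reachability within a fixed slice. -/
def reach {n : ℕ} (Ω : Set (Fin n → Hq)) (K : Hq) (z : Fin n → ℂ) : Prop :=
  ∃ γ : C(unitInterval, Fin n → ℂ), isRealPt (γ 0) ∧ (∀ t, liftP γ K t ∈ Ω) ∧ γ 1 = z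

lemma reach_real {n : ℕ} {Ω : Set (Fin n → Hq)} {K : Hq} {z : Fin n → ℂ}
    (hz : isRealPt z) (hm : liftMap K z ∈ Ω) : reach Ω K z :=
  ⟨ContinuousMap.const _ z, hz, fun _ => hm, rfl⟩

lemma reach_conj {n : ℕ} {Ω : Set (Fin n → Hq)} {K : Hq} {z : Fin n → ℂ}
    (h : reach Ω K z) : reach Ω (-K) (fun k => star (z k)) := by
  obtain ⟨γ, h0, hl, h1⟩ := h
  refine ⟨conjPath γ, ?_, ?_, ?_⟩
  · intro k
    show (star (γ 0 k)).im = 0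
    simp [Complex.star_def, h0 k]
  · intro t
    rw [liftP_conjPath]
    exact hl t
  · funext k
    show star (γ 1 k) = star (z k)
    rw [h1]

lemma reach_extend {n : ℕ} {Ω : Set (Fin n → Hq)} {K : Hq} {z w : Fin n → ℂ}
    (hz : reach Ω K z)
    (hseg : ∀ s : unitInterval, liftMap K ((1 - (s : ℝ)) • z + (s : ℝ) • w) ∈ Ω) :
    reach Ω K w := by
  obtain ⟨γ, h0, hl, h1⟩ := hz
  let p : Path (γ 0) z := ⟨γ, rfl, h1⟩
  let seg : Path z w :=
    ⟨⟨fun s => (1 - (s : ℝ)) • z + (s : ℝ) • w, by continuity⟩, by simp, by simp⟩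
  refine ⟨(p.trans seg).toContinuousMap, ?_, ?_, ?_⟩
  · have : (p.trans seg) 0 = γ 0 := (p.trans seg).source
    intro k; rw [show ((p.trans seg).toContinuousMap) 0 = γ 0 from this]; exact h0 k
  · intro t
    have hmem : (p.trans seg) t ∈ Set.range ⇑(p.trans seg) := ⟨t, rfl⟩
    rw [Path.trans_range] at hmem
    rcases hmem with ⟨s, hs⟩ | ⟨s, hs⟩
    · have : liftP (p.trans seg).toContinuousMap K t = liftP γ K s := by
        unfold liftP; rw [show ((p.trans seg).toContinuousMap) t = γ s from hs ▸ rfl]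
      rw [this]; exact hl s
    · have : ((p.trans seg).toContinuousMap) t = (1 - (s : ℝ)) • z + (s : ℝ) • w := hs ▸ rfl
      show liftMap K (((p.trans seg).toContinuousMap) t) ∈ Ω
      rw [this]; exact hseg s
  · exact (p.trans seg).target
lemma cross_slice {n : ℕ} {I K : Hq} (hI : I ∈ Sph) (hK : K ∈ Sph) {z w : Fin n → ℂ}
    (h : liftMap I z = liftMap K w) :
    (I = K ∧ z = w) ∨ (I = -K ∧ z = fun k => star (w k)) ∨
      (isRealPt z ∧ isRealPt w ∧ z = w) := by
  have hcomp : ∀ k, psi I (z k) = psi K (w k) := fun k => congrFun h k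
  have hre : ∀ k, (z k).re = (w k).re := fun k => by
    have := congrArg QuaternionAlgebra.re (hcomp k); rwa [psi_re hI, psi_re hK] at this
  have him : ∀ k, (z k).im • I = (w k).im • K := fun k => by
    have h1 : ((z k).re : Hq) + (z k).im • I = ((w k).re : Hq) + (w k).im • K := hcomp k
    rw [← hre k] at h1
    exact add_left_cancel h1
  by_cases hzr : isRealPt z
  · right; right
    have hwr : isRealPt w := fun k => by
      have h2 := him k; rw [hzr k, zero_smul] at h2
      rcases smul_eq_zero.mp h2.symm with h' | h'
      · exact h'
      · exact absurd h' (sph_ne_zero hK)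
    exact ⟨hzr, hwr, funext fun k => Complex.ext (hre k) (by rw [hzr k, hwr k])⟩
  · obtain ⟨k0, hk0⟩ := not_forall.mp hzr
    rcases smul_sph_cross hI hK hk0 (him k0) with ⟨hIK, _⟩ | ⟨hIK, _⟩
    · left
      refine ⟨hIK, funext fun k => Complex.ext (hre k) ?_⟩
      have h2 := him k; rw [hIK] at h2
      exact smul_sph_inj hK h2
    · right; left
      refine ⟨hIK, funext fun k => Complex.ext ?_ ?_⟩
      · rw [hre k]; simp [Complex.star_def]
      · have h2 := him k; rw [hIK] at h2
        have h3 : (-(z k).im) • K = (w k).im • K := by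
          rw [neg_smul, ← smul_neg]; exact h2
        have h4 := smul_sph_inj hK h3
        simp only [Complex.star_def, Complex.conj_im]
        linarith

lemma reach_open {n : ℕ} {Ω : Set (Fin n → Hq)} {K : Hq}
    (hop : IsOpen {z : Fin n → ℂ | liftMap K z ∈ Ω}) :
    IsOpen {z : Fin n → ℂ | liftMap K z ∈ Ω ∧ reach Ω K z} ∧
    IsOpen {z : Fin n → ℂ | liftMap K z ∈ Ω ∧ ¬ reach Ω K z} := by
  have key : ∀ z : Fin n → ℂ, liftMap K z ∈ Ω → ∃ ε > 0,
      Metric.ball z ε ⊆ {z : Fin n → ℂ | liftMap K z ∈ Ω} ∧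
      ∀ w ∈ Metric.ball z ε, (reach Ω K z ↔ reach Ω K w) := by
    intro z hz
    obtain ⟨ε, hε, hball⟩ := Metric.isOpen_iff.mp hop z hz
    refine ⟨ε, hε, hball, fun w hw => ?_⟩
    have hzball : z ∈ Metric.ball z ε := Metric.mem_ball_self hε
    have seg : ∀ a b : Fin n → ℂ, a ∈ Metric.ball z ε → b ∈ Metric.ball z ε →
        ∀ s : unitInterval, liftMap K ((1 - (s : ℝ)) • a + (s : ℝ) • b) ∈ Ω := by
      intro a b ha hb s
      apply hball
      exact (convex_ball z ε) ha hb (by linarith [s.2.2] : (0:ℝ) ≤ 1 - (s:ℝ)) s.2.1 (by ring)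
    exact ⟨fun hr => reach_extend hr (seg z w hzball hw),
           fun hr => reach_extend hr (seg w z hw hzball)⟩
  constructor
  · rw [Metric.isOpen_iff]
    rintro z ⟨hz, hr⟩
    obtain ⟨ε, hε, hball, hiff⟩ := key z hz
    exact ⟨ε, hε, fun w hw => ⟨hball hw, (hiff w hw).mp hr⟩⟩
  · rw [Metric.isOpen_iff]
    rintro z ⟨hz, hr⟩
    obtain ⟨ε, hε, hball, hiff⟩ := key z hz
    exact ⟨ε, hε, fun w hw => ⟨hball hw, fun hrw => hr ((hiff w hw).mpr hrw)⟩⟩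

lemma rpc_of_sliceDomain {n : ℕ} (Ω : Set (Fin n → Hq)) (hΩ : SliceDomain Ω)
    (hR : ∃ q ∈ Ω, isRealH q) : RealPathConnected Ω := by
  obtain ⟨⟨hsub, hslice⟩, hconn⟩ := hΩ
  set U : Set (Fin n → Hq) :=
    {q | ∃ K ∈ Sph, ∃ z, q = liftMap K z ∧ liftMap K z ∈ Ω ∧ reach Ω K z} with hU
  set V : Set (Fin n → Hq) :=
    {q | ∃ K ∈ Sph, ∃ z, q = liftMap K z ∧ liftMap K z ∈ Ω ∧ ¬ reach Ω K z} with hV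
  have hUpre : ∀ J ∈ Sph,
      {z : Fin n → ℂ | liftMap J z ∈ U} = {z | liftMap J z ∈ Ω ∧ reach Ω J z} := by
    intro J hJ
    ext z0
    simp only [hU, Set.mem_setOf_eq]
    constructor
    · rintro ⟨K, hK, w, heq, hw, hr⟩
      have hmem : liftMap J z0 ∈ Ω := heq ▸ hw
      refine ⟨hmem, ?_⟩
      rcases cross_slice hJ hK heq with ⟨hJK, hzw⟩ | ⟨hJK, hzw⟩ | ⟨hzr, _, _⟩
      · rw [hzw, hJK]; exact hr
      · rw [hzw, hJK]; exact reach_conj hr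
      · exact reach_real hzr hmem
    · rintro ⟨hm, hr⟩; exact ⟨J, hJ, z0, rfl, hm, hr⟩
  have hVpre : ∀ J ∈ Sph,
      {z : Fin n → ℂ | liftMap J z ∈ V} = {z | liftMap J z ∈ Ω ∧ ¬ reach Ω J z} := by
    intro J hJ
    ext z0
    simp only [hV, Set.mem_setOf_eq]
    constructor
    · rintro ⟨K, hK, w, heq, hw, hr⟩
      have hmem : liftMap J z0 ∈ Ω := heq ▸ hw
      refine ⟨hmem, ?_⟩
      rcases cross_slice hJ hK heq with ⟨hJK, hzw⟩ | ⟨hJK, hzw⟩ | ⟨hzr, hwr, _⟩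
      · rw [hzw, hJK]; exact hr
      · intro hr0
        apply hr
        have h2 := reach_conj hr0
        rw [hJK] at h2
        rw [neg_neg] at h2
        have h3 : (fun k => star (z0 k)) = w := by
          rw [hzw]; funext k; exact star_star (w k)
        rwa [h3] at h2
      · exact absurd (reach_real hwr hw) hr
    · rintro ⟨hm, hr⟩; exact ⟨J, hJ, z0, rfl, hm, hr⟩
  have hUopen : SliceOpen U := by
    constructor
    · rintro q ⟨K, hK, z, heq, _⟩; exact ⟨K, hK, z, heq⟩
    · intro J hJ; rw [hUpre J hJ]; exact (reach_open (hslice J hJ)).1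
  have hVopen : SliceOpen V := by
    constructor
    · rintro q ⟨K, hK, z, heq, _⟩; exact ⟨K, hK, z, heq⟩
    · intro J hJ; rw [hVpre J hJ]; exact (reach_open (hslice J hJ)).2
  have hcover : Ω ⊆ U ∪ V := by
    intro q hq
    obtain ⟨K, hK, z, heq⟩ := hsub hq
    by_cases hr : reach Ω K z
    · left; exact ⟨K, hK, z, heq, heq ▸ hq, hr⟩
    · right; exact ⟨K, hK, z, heq, heq ▸ hq, hr⟩
  obtain ⟨q0, hq0, hq0r⟩ := hR
  obtain ⟨K0, hK0, z0, heq0⟩ := hsub hq0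
  have hz0r : isRealPt z0 := by
    intro k
    have h1 : q0 k = psi K0 (z0 k) := congrFun heq0 k
    have h2 : psi K0 (z0 k) = (((q0 k).re : ℝ) : Hq) := h1 ▸ hq0r k
    exact (psi_eq_real hK0 h2).1
  have hUne : (Ω ∩ U).Nonempty :=
    ⟨q0, hq0, K0, hK0, z0, heq0, heq0 ▸ hq0, reach_real hz0r (heq0 ▸ hq0)⟩
  have hVempty : ∀ x ∈ Ω, x ∉ V := by
    intro x hxΩ hxV
    have hVne : (Ω ∩ V).Nonempty := ⟨x, hxΩ, hxV⟩
    obtain ⟨y, ⟨⟨hyΩ, hyU⟩, hyV⟩⟩ := hconn U V hUopen hVopen hcover hUne hVne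
    obtain ⟨K, hK, z, heq, hm, hr⟩ := hyU
    have hzV : z ∈ {z : Fin n → ℂ | liftMap K z ∈ V} := by
      show liftMap K z ∈ V; rw [← heq]; exact hyV
    rw [hVpre K hK] at hzV
    exact hzV.2 hr
  intro q hq
  have hqU : q ∈ U := by
    rcases hcover hq with h | h
    · exact h
    · exact absurd h (hVempty q hq)
  obtain ⟨K, hK, z, heq, hm, γ, hγ0, hγl, hγ1⟩ := hqU
  refine ⟨γ, ⟨hγ0, K, hK, hγl⟩, K, ⟨hK, hγl⟩, ?_⟩
  show liftMap K (γ 1) = q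
  rw [hγ1, ← heq]
lemma neg_mem_SUnits {n : ℕ} {Ω : Set (Fin n → Hq)} (hsym : WeaklyAxiallySymmetric Ω)
    {γ : C(unitInterval, Fin n → ℂ)} {I : Hq} (hI : I ∈ SUnits Ω γ) : -I ∈ SUnits Ω γ := by
  refine ⟨neg_mem_sph hI.1, fun t => ?_⟩
  have hmem : (fun k => ((γ t k).re : Hq) + (γ t k).im • I) ∈ Ω := hI.2 t
  have h2 := hsym (fun k => (γ t k).re) (fun k => (γ t k).im) I hI.1 hmem
  have h3 : liftP γ (-I) t = fun k => ((γ t k).re : Hq) - (γ t k).im • I := by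
    funext k
    show psi (-I) (γ t k) = _
    rw [psi, smul_neg, sub_eq_add_neg]
  rw [h3]
  exact h2

/-- a weakly axially symmetric slice-domain meeting `ℝⁿ` is
self-stem-preserving. -/
theorem weaklyAxiallySymmetric_selfStemPreserving {n : ℕ} (Ω : Set (Fin n → Hq))
    (hsym : WeaklyAxiallySymmetric Ω) (hΩ : SliceDomain Ω) (hR : ∃ q ∈ Ω, isRealH q) :
    SelfStemPreserving Ω := by
  refine ⟨rpc_of_sliceDomain Ω hΩ hR, ?_, ?_⟩
  · intro γ hγ
    obtain ⟨h0, I, hI⟩ := hγ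
    exact ⟨I, hI, -I, neg_mem_SUnits hsym hI, sph_ne_neg hI.1⟩
  · intro α hα β hβ hend I hI
    exact ⟨-I, ⟨neg_mem_SUnits hsym hI.1, neg_mem_SUnits hsym hI.2⟩,
      Ne.symm (sph_ne_neg hI.1.1)⟩
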